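/- Theorem (logical consistency): there is no term t such that • ⊢ t : ⊥ is derivable in the empty context, where ⊥ = ∀X₀ X₀. -/

import Mathlib

namespace CBV

/-! ## Syntax: values, terms, stacks, processes of the call-by-value λμ-calculus.
    λ-variables, μ-variables, term variables, labels and constructors are all
    represented by natural numbers. -/

mutual
  /-- Values: `x`, `λx.t`, `C[v]`, `{lᵢ = vᵢ}`. -/
  inductive Val : Type where
    | var : ℕ → Val                      -- λ-variable x
    | lam : ℕ → Trm → Val                -- λx.t
    | cns : ℕ → Val → Val                -- C[v]
    | rcd : Flds → Val                   -- {lᵢ = vᵢ}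
  /-- Record fields: a finite list of (label, value) pairs. -/
  inductive Flds : Type where
    | nil : Flds
    | cons : ℕ → Val → Flds → Flds
  /-- Terms: `a`, `v`, `t u`, `μα.t`, `p`, `v.l`, `case_v [Cᵢ[xᵢ] → tᵢ]`, `δ_{v,w}`. -/
  inductive Trm : Type where
    | tvar : ℕ → Trm                     -- term variable a
    | val : Val → Trm
    | app : Trm → Trm → Trm
    | mu : ℕ → Trm → Trm                 -- μα.t
    | prc : Proc → Trm
    | prj : Val → ℕ → Trm                -- v.l
    | cse : Val → Brs → Trm              -- case_v [...]
    | dlt : Val → Val → Trm              -- δ_{v,w}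
  /-- Case branches: a finite list of (constructor, bound λ-variable, body). -/
  inductive Brs : Type where
    | nil : Brs
    | cons : ℕ → ℕ → Trm → Brs → Brs
  /-- Stacks: `α`, `v.π`, `[t]π`. -/
  inductive Stk : Type where
    | svar : ℕ → Stk                     -- stack (μ-)variable α
    | push : Val → Stk → Stk             -- v.π
    | frame : Trm → Stk → Stk            -- [t]π
  /-- Processes: `t ∗ π`. -/
  inductive Proc : Type where
    | mk : Trm → Stk → Proc
end

/-- Lookup of a label in a record. -/
def Flds.lookup : Flds → ℕ → Option Val
  | .nil, _ => none
  | .cons l v fs, k => if l = k then some v else fs.lookup k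

/-- Lookup of a constructor among case branches, returning the bound variable and body. -/
def Brs.lookup : Brs → ℕ → Option (ℕ × Trm)
  | .nil, _ => none
  | .cons c x t bs, k => if c = k then some (x, t) else bs.lookup k

/-- A substitution maps λ-variables to values, μ-variables to stacks and
    term variables to terms (totally; the identity outside its support). -/
structure Subst : Type where
  lamS : ℕ → Val
  muS  : ℕ → Stk
  trmS : ℕ → Trm

/-- The identity substitution. -/
def Subst.id : Subst := ⟨Val.var, Stk.svar, Trm.tvar⟩

/-- The substitution [x := v] of a single λ-variable. -/
def subst1Lam (x : ℕ) (v : Val) : Subst :=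
  { Subst.id with lamS := Function.update Val.var x v }

/-- The substitution [α := π] of a single μ-variable. -/
def subst1Mu (α : ℕ) (π : Stk) : Subst :=
  { Subst.id with muS := Function.update Stk.svar α π }

/-- The substitution [a := t] of a single term variable. -/
def subst1Trm (a : ℕ) (t : Trm) : Subst :=
  { Subst.id with trmS := Function.update Trm.tvar a t }

/-- Remove a λ-variable from the support of a substitution (used under binders). -/
def Subst.skipLam (σ : Subst) (x : ℕ) : Subst :=
  { σ with lamS := Function.update σ.lamS x (Val.var x) }

/-- Remove a μ-variable from the support of a substitution (used under binders). -/
def Subst.skipMu (σ : Subst) (α : ℕ) : Subst :=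
  { σ with muS := Function.update σ.muS α (Stk.svar α) }

mutual
  /-- Application of a substitution to a value. -/
  def substVal (σ : Subst) : Val → Val
    | .var x => σ.lamS x
    | .lam x t => .lam x (substTrm (σ.skipLam x) t)
    | .cns c v => .cns c (substVal σ v)
    | .rcd fs => .rcd (substFlds σ fs)
  /-- Application of a substitution to record fields. -/
  def substFlds (σ : Subst) : Flds → Flds
    | .nil => .nil
    | .cons l v fs => .cons l (substVal σ v) (substFlds σ fs)
  /-- Application of a substitution to a term. -/
  def substTrm (σ : Subst) : Trm → Trm
    | .tvar a => σ.trmS a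
    | .val v => .val (substVal σ v)
    | .app t u => .app (substTrm σ t) (substTrm σ u)
    | .mu α t => .mu α (substTrm (σ.skipMu α) t)
    | .prc p => .prc (substPrc σ p)
    | .prj v l => .prj (substVal σ v) l
    | .cse v bs => .cse (substVal σ v) (substBrs σ bs)
    | .dlt v w => .dlt (substVal σ v) (substVal σ w)
  /-- Application of a substitution to case branches. -/
  def substBrs (σ : Subst) : Brs → Brs
    | .nil => .nil
    | .cons c x t bs => .cons c x (substTrm (σ.skipLam x) t) (substBrs σ bs)
  /-- Application of a substitution to a stack. -/
  def substStk (σ : Subst) : Stk → Stk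
    | .svar α => σ.muS α
    | .push v π => .push (substVal σ v) (substStk σ π)
    | .frame t π => .frame (substTrm σ t) (substStk σ π)
  /-- Application of a substitution to a process. -/
  def substPrc (σ : Subst) : Proc → Proc
    | .mk t π => .mk (substTrm σ t) (substStk σ π)
end

/-! ## The reduction relation (≻). -/

/-- The reduction relation (≻) of the Krivine abstract machine. -/
inductive Red : Proc → Proc → Prop where
  | app (t u : Trm) (π : Stk) :
      Red (.mk (.app t u) π) (.mk u (.frame t π))
  | frame (v : Val) (t : Trm) (π : Stk) :
      Red (.mk (.val v) (.frame t π)) (.mk t (.push v π))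
  | beta (x : ℕ) (t : Trm) (v : Val) (π : Stk) :
      Red (.mk (.val (.lam x t)) (.push v π)) (.mk (substTrm (subst1Lam x v) t) π)
  | mu (α : ℕ) (t : Trm) (π : Stk) :
      Red (.mk (.mu α t) π) (.mk (substTrm (subst1Mu α π) t) π)
  | prc (p : Proc) (π : Stk) :
      Red (.mk (.prc p) π) p
  | prj (fs : Flds) (l : ℕ) (v : Val) (π : Stk) :
      fs.lookup l = some v →
      Red (.mk (.prj (.rcd fs) l) π) (.mk (.val v) π)
  | cse (c : ℕ) (v : Val) (bs : Brs) (x : ℕ) (t : Trm) (π : Stk) :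
      bs.lookup c = some (x, t) →
      Red (.mk (.cse (.cns c v) bs) π) (.mk (substTrm (subst1Lam x v) t) π)

/-- k-fold application of a relation. -/
def iterRel (R : Proc → Proc → Prop) : ℕ → Proc → Proc → Prop
  | 0 => Eq
  | k + 1 => fun p r => ∃ q, R p q ∧ iterRel R k q r

/-- A process is final if it is of the form `v ∗ α`. -/
def Final (p : Proc) : Prop :=
  ∃ (v : Val) (α : ℕ), p = .mk (.val v) (.svar α)

/-- A process is δ-like if it is of the form `δ_{v,w} ∗ π`. -/
def DeltaLike (p : Proc) : Prop :=
  ∃ (v w : Val) (π : Stk), p = .mk (.dlt v w) π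

/-- A process is blocked if it has no (≻)-reduct. -/
def Blocked (p : Proc) : Prop := ¬ ∃ q, Red p q

/-- A process is stuck if it is neither final nor δ-like, and all its
    substitution instances are blocked. -/
def Stuck (p : Proc) : Prop :=
  ¬ Final p ∧ ¬ DeltaLike p ∧ ∀ σ : Subst, Blocked (substPrc σ p)

/-- A process is non-terminating if it reaches no blocked process. -/
def NonTerminating (p : Proc) : Prop :=
  ¬ ∃ q, Relation.ReflTransGen Red p q ∧ Blocked q

/-- `p ⇓_R`: the process `p` converges for the reduction relation `R`,
    i.e. it `R`-reduces to a final process. -/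
def ConvergesIn (R : Proc → Proc → Prop) (p : Proc) : Prop :=
  ∃ q, Relation.ReflTransGen R p q ∧ Final q

/-- The indexed reduction relation (↪ᵢ) = (≻) ∪ {(δ_{v,w} ∗ π, v ∗ π) | ∃ j < i, v ≢ⱼ w}.
    (The condition `v ≢ⱼ w` is inlined; it coincides with `¬ EquivI j v w` below.) -/
def RedI : ℕ → Proc → Proc → Prop
  | i => fun p q =>
      Red p q ∨
      ∃ (v w : Val) (π : Stk), p = .mk (.dlt v w) π ∧ q = .mk (.val v) π ∧
        ∃ j, ∃ _ : j < i,
          ¬ (∀ k, ∀ _ : k ≤ j, ∀ (π' : Stk) (σ : Subst),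
              ConvergesIn (RedI k) (.mk (substTrm σ (.val v)) π') ↔
              ConvergesIn (RedI k) (.mk (substTrm σ (.val w)) π'))
  termination_by i => i
  decreasing_by omega

/-- The indexed observational equivalence (≡ᵢ). -/
def EquivI (i : ℕ) (t u : Trm) : Prop :=
  ∀ j, j ≤ i → ∀ (π : Stk) (σ : Subst),
    ConvergesIn (RedI j) (.mk (substTrm σ t) π) ↔
    ConvergesIn (RedI j) (.mk (substTrm σ u) π)

/-- The reduction relation (↪) = ∪ᵢ (↪ᵢ). -/
def RedFull (p q : Proc) : Prop := ∃ i, RedI i p q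

/-- Observational equivalence (≡) = ∩ᵢ (≡ᵢ). -/
def Equiv (t u : Trm) : Prop := ∀ i, EquivI i t u

/-! ## The pole and orthogonality. -/

/-- The pole ⫫ = {p | p ⇓_↪}. -/
def Pole : Set Proc := {p | ConvergesIn RedFull p}

/-- Orthogonal of a set of values: φ^⊥ = {π | ∀ v ∈ φ, v ∗ π ∈ ⫫}. -/
def orth (φ : Set Val) : Set Stk :=
  {π | ∀ v ∈ φ, Proc.mk (.val v) π ∈ Pole}

/-- Bi-orthogonal of a set of values: φ^⊥⊥ = {t | ∀ π ∈ φ^⊥, t ∗ π ∈ ⫫}. -/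
def biorth (φ : Set Val) : Set Trm :=
  {t | ∀ π ∈ orth φ, Proc.mk t π ∈ Pole}

/-! ## Free variables and closedness. -/

/-- The kinds of variables: λ-variables, μ-variables, term variables,
    predicate variables. -/
inductive VKind : Type where
  | lam | mu | trm | prd
deriving DecidableEq

mutual
  /-- Free variables (of every kind) of a value. -/
  def fvVal : Val → Set (VKind × ℕ)
    | .var x => {(VKind.lam, x)}
    | .lam x t => fvTrm t \ {(VKind.lam, x)}
    | .cns _ v => fvVal v
    | .rcd fs => fvFlds fs
  /-- Free variables of record fields. -/
  def fvFlds : Flds → Set (VKind × ℕ)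
    | .nil => ∅
    | .cons _ v fs => fvVal v ∪ fvFlds fs
  /-- Free variables of a term. -/
  def fvTrm : Trm → Set (VKind × ℕ)
    | .tvar a => {(VKind.trm, a)}
    | .val v => fvVal v
    | .app t u => fvTrm t ∪ fvTrm u
    | .mu α t => fvTrm t \ {(VKind.mu, α)}
    | .prc p => fvPrc p
    | .prj v _ => fvVal v
    | .cse v bs => fvVal v ∪ fvBrs bs
    | .dlt v w => fvVal v ∪ fvVal w
  /-- Free variables of case branches. -/
  def fvBrs : Brs → Set (VKind × ℕ)
    | .nil => ∅
    | .cons _ x t bs => (fvTrm t \ {(VKind.lam, x)}) ∪ fvBrs bs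
  /-- Free variables of a stack. -/
  def fvStk : Stk → Set (VKind × ℕ)
    | .svar α => {(VKind.mu, α)}
    | .push v π => fvVal v ∪ fvStk π
    | .frame t π => fvTrm t ∪ fvStk π
  /-- Free variables of a process. -/
  def fvPrc : Proc → Set (VKind × ℕ)
    | .mk t π => fvTrm t ∪ fvStk π
end

/-- A term is closed if it contains no free variable of any kind. -/
def ClosedTrm (t : Trm) : Prop := fvTrm t = ∅

end CBV
namespace CBV

/-! ## Second-order formulas.

Predicate variables are interpreted by (semantic) predicates mapping lists of
terms to sets of values; the constructor `papp` allows a formula to contain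
such a semantic predicate directly (formulas with parameters), which is used
to state the second-order elimination/introduction rules. -/

mutual
  /-- Formulas of the second-order type system. -/
  inductive Form : Type where
    | pvar : ℕ → List Trm → Form                     -- X(t₁,…,tₙ)
    | papp : (List Trm → Set Val) → List Trm → Form  -- P(t₁,…,tₙ), P a semantic predicate
    | arr  : Form → Form → Form                      -- A ⇒ B
    | all1 : ℕ → Form → Form                         -- ∀a A
    | ex1  : ℕ → Form → Form                         -- ∃a A
    | all2 : ℕ → Form → Form                         -- ∀X A
    | ex2  : ℕ → Form → Form                         -- ∃X A
    | rcd  : FFlds → Form                            -- {lᵢ : Aᵢ}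
    | vnt  : FFlds → Form                            -- [Cᵢ : Aᵢ]
    | mem  : Trm → Form → Form                       -- t ∈ A
    | rest : Form → Trm → Trm → Form                 -- A ↾ t ≡ u
  /-- Lists of (label/constructor, formula) pairs. -/
  inductive FFlds : Type where
    | nil : FFlds
    | cons : ℕ → Form → FFlds → FFlds
end

/-- Lookup in a list of (label, formula) pairs. -/
def FFlds.lookup : FFlds → ℕ → Option Form
  | .nil, _ => none
  | .cons l A Fs, k => if l = k then some A else Fs.lookup k

/-- Convert to an ordinary list. -/
def FFlds.toList : FFlds → List (ℕ × Form)
  | .nil => []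
  | .cons l A Fs => (l, A) :: Fs.toList

/-- Remove a term variable from the support of a substitution. -/
def Subst.skipTrm (σ : Subst) (a : ℕ) : Subst :=
  { σ with trmS := Function.update σ.trmS a (Trm.tvar a) }

mutual
  /-- Application of a (term-level) substitution to a formula. -/
  def substForm (σ : Subst) : Form → Form
    | .pvar X ts => .pvar X (ts.map (substTrm σ))
    | .papp P ts => .papp P (ts.map (substTrm σ))
    | .arr A B => .arr (substForm σ A) (substForm σ B)
    | .all1 a A => .all1 a (substForm (σ.skipTrm a) A)
    | .ex1 a A => .ex1 a (substForm (σ.skipTrm a) A)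
    | .all2 X A => .all2 X (substForm σ A)
    | .ex2 X A => .ex2 X (substForm σ A)
    | .rcd Fs => .rcd (substFFlds σ Fs)
    | .vnt Cs => .vnt (substFFlds σ Cs)
    | .mem t A => .mem (substTrm σ t) (substForm σ A)
    | .rest A t u => .rest (substForm σ A) (substTrm σ t) (substTrm σ u)
  def substFFlds (σ : Subst) : FFlds → FFlds
    | .nil => .nil
    | .cons l A Fs => .cons l (substForm σ A) (substFFlds σ Fs)
end

mutual
  /-- Substitution A[X := P] of a predicate variable by a (semantic) predicate. -/
  def substFormP (X : ℕ) (P : List Trm → Set Val) : Form → Form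
    | .pvar Y ts => if Y = X then .papp P ts else .pvar Y ts
    | .papp Q ts => .papp Q ts
    | .arr A B => .arr (substFormP X P A) (substFormP X P B)
    | .all1 a A => .all1 a (substFormP X P A)
    | .ex1 a A => .ex1 a (substFormP X P A)
    | .all2 Y A => if Y = X then .all2 Y A else .all2 Y (substFormP X P A)
    | .ex2 Y A => if Y = X then .ex2 Y A else .ex2 Y (substFormP X P A)
    | .rcd Fs => .rcd (substFFldsP X P Fs)
    | .vnt Cs => .vnt (substFFldsP X P Cs)
    | .mem t A => .mem t (substFormP X P A)
    | .rest A t u => .rest (substFormP X P A) t u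
  def substFFldsP (X : ℕ) (P : List Trm → Set Val) : FFlds → FFlds
    | .nil => .nil
    | .cons l A Fs => .cons l (substFormP X P A) (substFFldsP X P Fs)
end

/-- Free variables of a list of terms. -/
def fvTrmList (ts : List Trm) : Set (VKind × ℕ) := {p | ∃ t ∈ ts, p ∈ fvTrm t}

mutual
  /-- Free variables (of every kind, including predicate variables) of a formula. -/
  def fvForm : Form → Set (VKind × ℕ)
    | .pvar X ts => insert (VKind.prd, X) (fvTrmList ts)
    | .papp _ ts => fvTrmList ts
    | .arr A B => fvForm A ∪ fvForm B
    | .all1 a A => fvForm A \ {(VKind.trm, a)}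
    | .ex1 a A => fvForm A \ {(VKind.trm, a)}
    | .all2 X A => fvForm A \ {(VKind.prd, X)}
    | .ex2 X A => fvForm A \ {(VKind.prd, X)}
    | .rcd Fs => fvFFlds Fs
    | .vnt Cs => fvFFlds Cs
    | .mem t A => fvTrm t ∪ fvForm A
    | .rest A t u => fvForm A ∪ fvTrm t ∪ fvTrm u
  def fvFFlds : FFlds → Set (VKind × ℕ)
    | .nil => ∅
    | .cons _ A Fs => fvForm A ∪ fvFFlds Fs
end

/-- A set of values is ≡-closed if it is compatible with observational equivalence. -/
def EqClosed (S : Set Val) : Prop :=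
  ∀ v ∈ S, ∀ w : Val, Equiv (.val v) (.val w) → w ∈ S

/-- A substitution together with an interpretation of predicate variables. -/
structure FSubst : Type where
  sub : Subst
  prdS : ℕ → List Trm → Set Val

/-- Update of the term-variable component. -/
def FSubst.updTrm (σ : FSubst) (a : ℕ) (t : Trm) : FSubst :=
  { σ with sub := { σ.sub with trmS := Function.update σ.sub.trmS a t } }

/-- Update of the predicate-variable component. -/
def FSubst.updPrd (σ : FSubst) (X : ℕ) (P : List Trm → Set Val) : FSubst :=
  { σ with prdS := Function.update σ.prdS X P }

mutual
  /-- The raw semantics ⟦A⟧_σ of a formula: a set of values. -/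
  def sem (σ : FSubst) : Form → Set Val
    | .pvar X ts => σ.prdS X (ts.map (substTrm σ.sub))
    | .papp P ts => P (ts.map (substTrm σ.sub))
    | .arr A B =>
        {v | ∃ x t, v = .lam x t ∧
          ∀ w ∈ sem σ A, substTrm (subst1Lam x w) t ∈ biorth (sem σ B)}
    | .all1 a A => {v | ∀ t : Trm, ClosedTrm t → v ∈ sem (σ.updTrm a t) A}
    | .ex1 a A => {v | ∃ t : Trm, ClosedTrm t ∧ v ∈ sem (σ.updTrm a t) A}
    | .all2 X A =>
        {v | ∀ P : List Trm → Set Val, (∀ ts, EqClosed (P ts)) → v ∈ sem (σ.updPrd X P) A}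
    | .ex2 X A =>
        {v | ∃ P : List Trm → Set Val, (∀ ts, EqClosed (P ts)) ∧ v ∈ sem (σ.updPrd X P) A}
    | .rcd Fs => {v | ∃ fs : Flds, v = .rcd fs ∧ semFlds σ Fs fs}
    | .vnt Cs => semVnts σ Cs
    | .mem t A => {v | v ∈ sem σ A ∧ Equiv (substTrm σ.sub t) (.val v)}
    | .rest A t u => {v | Equiv (substTrm σ.sub t) (substTrm σ.sub u) ∧ v ∈ sem σ A}
  /-- Pointwise semantics of a record type. -/
  def semFlds (σ : FSubst) : FFlds → Flds → Prop
    | .nil, .nil => True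
    | .nil, .cons _ _ _ => False
    | .cons _ _ _, .nil => False
    | .cons l A Fs, .cons l' v fs => l = l' ∧ v ∈ sem σ A ∧ semFlds σ Fs fs
  /-- Semantics of a variant type (union over the constructors). -/
  def semVnts (σ : FSubst) : FFlds → Set Val
    | .nil => ∅
    | .cons c A Cs => {w | ∃ v, w = .cns c v ∧ v ∈ sem σ A} ∪ semVnts σ Cs
end

/-! ## Contexts and typing. -/

/-- Declarations of a context: `x : A`, `α : ¬A`, `a : Term`, `X : Pred`,
    `t ≡ u`, `t ≢ u`. -/
inductive Decl : Type where
  | lamD : ℕ → Form → Decl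
  | muD : ℕ → Form → Decl
  | trmD : ℕ → Decl
  | prdD : ℕ → Decl
  | eqD : Trm → Trm → Decl
  | neqD : Trm → Trm → Decl

/-- A context is a list of declarations (most recent first: `Γ, x : A` is
    `Decl.lamD x A :: Γ`). -/
abbrev Ctx : Type := List Decl

/-- The variables declared by a declaration. -/
def declDom : Decl → Set (VKind × ℕ)
  | .lamD x _ => {(VKind.lam, x)}
  | .muD α _ => {(VKind.mu, α)}
  | .trmD a => {(VKind.trm, a)}
  | .prdD X => {(VKind.prd, X)}
  | .eqD _ _ => ∅
  | .neqD _ _ => ∅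

/-- The domain of a context. -/
def domCtx (Γ : Ctx) : Set (VKind × ℕ) := {p | ∃ d ∈ Γ, p ∈ declDom d}

/-- The free variables of a declaration. -/
def declFV : Decl → Set (VKind × ℕ)
  | .lamD _ A => fvForm A
  | .muD _ A => fvForm A
  | .trmD _ => ∅
  | .prdD _ => ∅
  | .eqD t u => fvTrm t ∪ fvTrm u
  | .neqD t u => fvTrm t ∪ fvTrm u

/-- The free variables of a context. -/
def fvCtx (Γ : Ctx) : Set (VKind × ℕ) := {p | ∃ d ∈ Γ, p ∈ declFV d}

/-- Valid contexts (Figure 1 of the paper). -/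
inductive ValidCtx : Ctx → Prop where
  | nil : ValidCtx []
  | lamD {Γ x A} : ValidCtx Γ → (VKind.lam, x) ∉ domCtx Γ →
      fvForm A ⊆ insert (VKind.lam, x) (domCtx Γ) → ValidCtx (.lamD x A :: Γ)
  | muD {Γ α A} : ValidCtx Γ → (VKind.mu, α) ∉ domCtx Γ →
      fvForm A ⊆ domCtx Γ → ValidCtx (.muD α A :: Γ)
  | trmD {Γ a} : ValidCtx Γ → (VKind.trm, a) ∉ domCtx Γ → ValidCtx (.trmD a :: Γ)
  | prdD {Γ X} : ValidCtx Γ → (VKind.prd, X) ∉ domCtx Γ → ValidCtx (.prdD X :: Γ)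
  | eqD {Γ t u} : ValidCtx Γ → fvTrm t ∪ fvTrm u ⊆ domCtx Γ → ValidCtx (.eqD t u :: Γ)
  | neqD {Γ t u} : ValidCtx Γ → fvTrm t ∪ fvTrm u ⊆ domCtx Γ → ValidCtx (.neqD t u :: Γ)

mutual
  /-- The value typing judgement `Γ ⊩ v : A` (Figure 2 of the paper). -/
  inductive HasTypeV : Ctx → Val → Form → Prop where
    | ax (Γ : Ctx) (x : ℕ) (A : Form) :
        HasTypeV (.lamD x A :: Γ) (.var x) A
    | dn (Γ : Ctx) (v : Val) (A : Form) :
        HasTypeT Γ (.val v) A → HasTypeV Γ v A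
    | arrI (Γ : Ctx) (x : ℕ) (A : Form) (t : Trm) (B : Form) :
        HasTypeT (.lamD x A :: Γ) t B → HasTypeV Γ (.lam x t) (.arr A B)
    | memI (Γ : Ctx) (v : Val) (A : Form) :
        HasTypeV Γ v A → HasTypeV Γ v (.mem (.val v) A)
    | all1I (Γ : Ctx) (v : Val) (a : ℕ) (A : Form) :
        HasTypeV Γ v A → (VKind.trm, a) ∉ fvCtx Γ → HasTypeV Γ v (.all1 a A)
    | all2I (Γ : Ctx) (v : Val) (X : ℕ) (A : Form) :
        HasTypeV Γ v A → (VKind.prd, X) ∉ fvCtx Γ → HasTypeV Γ v (.all2 X A)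
    | rcdI (Γ : Ctx) (fs : Flds) (Fs : FFlds) :
        HasTypeFlds Γ fs Fs → HasTypeV Γ (.rcd fs) (.rcd Fs)
    | vntI (Γ : Ctx) (c : ℕ) (v : Val) (A : Form) (Cs : FFlds) :
        HasTypeV Γ v A → (c, A) ∈ Cs.toList → HasTypeV Γ (.cns c v) (.vnt Cs)

  /-- Pointwise typing of record fields. -/
  inductive HasTypeFlds : Ctx → Flds → FFlds → Prop where
    | nil (Γ : Ctx) : HasTypeFlds Γ .nil .nil
    | cons (Γ : Ctx) (l : ℕ) (v : Val) (A : Form) (fs : Flds) (Fs : FFlds) :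
        HasTypeV Γ v A → HasTypeFlds Γ fs Fs →
        HasTypeFlds Γ (.cons l v fs) (.cons l A Fs)

  /-- Typing of the branches of a case analysis on the value `v`. -/
  inductive HasTypeBrs : Ctx → Val → Brs → FFlds → Form → Prop where
    | nil (Γ : Ctx) (v : Val) (B : Form) : HasTypeBrs Γ v .nil .nil B
    | cons (Γ : Ctx) (v : Val) (c x : ℕ) (t : Trm) (bs : Brs) (A : Form) (Cs : FFlds) (B : Form) :
        HasTypeT (.eqD (.val (.cns c (.var x))) (.val v) :: .lamD x A :: Γ) t B →
        HasTypeBrs Γ v bs Cs B →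
        HasTypeBrs Γ v (.cons c x t bs) (.cons c A Cs) B

  /-- The term typing judgement `Γ ⊢ t : A` (Figure 2 of the paper). -/
  inductive HasTypeT : Ctx → Trm → Form → Prop where
    | up (Γ : Ctx) (v : Val) (A : Form) :
        HasTypeV Γ v A → HasTypeT Γ (.val v) A
    | arrE (Γ : Ctx) (t u : Trm) (A B : Form) :
        HasTypeT Γ t (.arr A B) → HasTypeT Γ u A → HasTypeT Γ (.app t u) B
    | muI (Γ : Ctx) (α : ℕ) (t : Trm) (A : Form) :
        HasTypeT (.muD α A :: Γ) t A → HasTypeT Γ (.mu α t) A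
    | name (Γ : Ctx) (α : ℕ) (t : Trm) (A B : Form) :
        HasTypeT (.muD α A :: Γ) t A →
        HasTypeT (.muD α A :: Γ) (.prc (.mk t (.svar α))) B
    | memE (Γ : Ctx) (x : ℕ) (u : Trm) (A : Form) (t : Trm) :
        HasTypeT (.eqD (.val (.var x)) u :: .lamD x A :: Γ) t A →
        HasTypeT (.lamD x (.mem u A) :: Γ) t A
    | restI (Γ : Ctx) (u₁ u₂ : Trm) (t : Trm) (A : Form) :
        HasTypeT (.eqD u₁ u₂ :: Γ) t A →
        HasTypeT (.eqD u₁ u₂ :: Γ) t (.rest A u₁ u₂)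
    | restE (Γ : Ctx) (x : ℕ) (A : Form) (u₁ u₂ : Trm) (t : Trm) (B : Form) :
        HasTypeT (.eqD u₁ u₂ :: .lamD x A :: Γ) t B →
        HasTypeT (.lamD x (.rest A u₁ u₂) :: Γ) t B
    | all1E (Γ : Ctx) (t : Trm) (a : ℕ) (A : Form) (u : Trm) :
        HasTypeT Γ t (.all1 a A) → HasTypeT Γ t (substForm (subst1Trm a u) A)
    | ex1I (Γ : Ctx) (t : Trm) (a : ℕ) (A : Form) (u : Trm) :
        HasTypeT Γ t (substForm (subst1Trm a u) A) → HasTypeT Γ t (.ex1 a A)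
    | ex1E (Γ : Ctx) (y : ℕ) (A : Form) (t : Trm) (B : Form) (a : ℕ) :
        HasTypeT (.lamD y A :: Γ) t B →
        (VKind.trm, a) ∉ fvCtx Γ ∪ fvForm B ∪ fvTrm t →
        HasTypeT (.lamD y (.ex1 a A) :: Γ) t B
    | all2E (Γ : Ctx) (t : Trm) (X : ℕ) (A : Form) (P : List Trm → Set Val) :
        HasTypeT Γ t (.all2 X A) → (∀ ts, EqClosed (P ts)) →
        HasTypeT Γ t (substFormP X P A)
    | ex2I (Γ : Ctx) (t : Trm) (X : ℕ) (A : Form) (P : List Trm → Set Val) :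
        (∀ ts, EqClosed (P ts)) → HasTypeT Γ t (substFormP X P A) →
        HasTypeT Γ t (.ex2 X A)
    | ex2E (Γ : Ctx) (x : ℕ) (A : Form) (t : Trm) (B : Form) (X : ℕ) :
        HasTypeT (.lamD x A :: Γ) t B →
        (VKind.prd, X) ∉ fvCtx Γ ∪ fvForm B →
        HasTypeT (.lamD x (.ex2 X A) :: Γ) t B
    | rcdE (Γ : Ctx) (v : Val) (Fs : FFlds) (l : ℕ) (A : Form) :
        HasTypeV Γ v (.rcd Fs) → Fs.lookup l = some A →
        HasTypeT Γ (.prj v l) A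
    | vntE (Γ : Ctx) (v : Val) (Cs : FFlds) (bs : Brs) (B : Form) :
        HasTypeV Γ v (.vnt Cs) → HasTypeBrs Γ v bs Cs B →
        HasTypeT Γ (.cse v bs) B
    | eqVL (Γ : Ctx) (w₁ w₂ : Val) (x : ℕ) (t : Trm) (A : Form) :
        HasTypeT (.eqD (.val w₁) (.val w₂) :: Γ) (substTrm (subst1Lam x w₁) t) A →
        HasTypeT (.eqD (.val w₁) (.val w₂) :: Γ) (substTrm (subst1Lam x w₂) t) A
    | eqTL (Γ : Ctx) (t₁ t₂ : Trm) (a : ℕ) (t : Trm) (A : Form) :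
        HasTypeT (.eqD t₁ t₂ :: Γ) (substTrm (subst1Trm a t₁) t) A →
        HasTypeT (.eqD t₁ t₂ :: Γ) (substTrm (subst1Trm a t₂) t) A
    | eqVR (Γ : Ctx) (w₁ w₂ : Val) (x : ℕ) (t : Trm) (A : Form) :
        HasTypeT (.eqD (.val w₁) (.val w₂) :: Γ) t (substForm (subst1Lam x w₁) A) →
        HasTypeT (.eqD (.val w₁) (.val w₂) :: Γ) t (substForm (subst1Lam x w₂) A)
    | eqTR (Γ : Ctx) (t₁ t₂ : Trm) (a : ℕ) (t : Trm) (A : Form) :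
        HasTypeT (.eqD t₁ t₂ :: Γ) t (substForm (subst1Trm a t₁) A) →
        HasTypeT (.eqD t₁ t₂ :: Γ) t (substForm (subst1Trm a t₂) A)
end

/-- A substitution σ realizes a context Γ. -/
def Realizes (σ : FSubst) (Γ : Ctx) : Prop :=
  (∀ x A, Decl.lamD x A ∈ Γ → σ.sub.lamS x ∈ sem σ A) ∧
  (∀ α A, Decl.muD α A ∈ Γ → σ.sub.muS α ∈ orth (sem σ A)) ∧
  (∀ X, Decl.prdD X ∈ Γ → ∀ ts, EqClosed (σ.prdS X ts)) ∧
  (∀ t u, Decl.eqD t u ∈ Γ → Equiv (substTrm σ.sub t) (substTrm σ.sub u)) ∧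
  (∀ t u, Decl.neqD t u ∈ Γ → ¬ Equiv (substTrm σ.sub t) (substTrm σ.sub u))

/-- A formula is pure if it contains no occurrence of the arrow ⇒. -/
inductive PureForm : Form → Prop where
  | pvar (X : ℕ) (ts : List Trm) : PureForm (.pvar X ts)
  | papp (P : List Trm → Set Val) (ts : List Trm) : PureForm (.papp P ts)
  | all1 {a A} : PureForm A → PureForm (.all1 a A)
  | ex1 {a A} : PureForm A → PureForm (.ex1 a A)
  | all2 {X A} : PureForm A → PureForm (.all2 X A)
  | ex2 {X A} : PureForm A → PureForm (.ex2 X A)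
  | rcd {Fs} : (∀ p ∈ FFlds.toList Fs, PureForm p.2) → PureForm (.rcd Fs)
  | vnt {Cs} : (∀ p ∈ FFlds.toList Cs, PureForm p.2) → PureForm (.vnt Cs)
  | mem {t A} : PureForm A → PureForm (.mem t A)
  | rest {A t u} : PureForm A → PureForm (.rest A t u)

end CBV

namespace CBV
/-! ## Auxiliary truth-value semantics for consistency. -/

/-- Truth value assigned to a semantic predicate (independent of its arguments). -/
def pinterp (P : List Trm → Set Val) : Prop := ∃ ts v, v ∈ P ts

mutual
  /-- Tarskian truth semantics of formulas, ignoring all term-level content. -/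
  def semF (ρ : ℕ → Prop) : Form → Prop
    | .pvar X _ => ρ X
    | .papp P _ => pinterp P
    | .arr A B => semF ρ A → semF ρ B
    | .all1 _ A => semF ρ A
    | .ex1 _ A => semF ρ A
    | .all2 X A => ∀ p : Prop, semF (Function.update ρ X p) A
    | .ex2 X A => ∃ p : Prop, semF (Function.update ρ X p) A
    | .rcd Fs => semAll ρ Fs
    | .vnt Cs => semAny ρ Cs
    | .mem _ A => semF ρ A
    | .rest A _ _ => semF ρ A
  def semAll (ρ : ℕ → Prop) : FFlds → Prop
    | .nil => True
    | .cons _ A Fs => semF ρ A ∧ semAll ρ Fs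
  def semAny (ρ : ℕ → Prop) : FFlds → Prop
    | .nil => False
    | .cons _ A Cs => semF ρ A ∨ semAny ρ Cs
end

mutual
  /-- Truth semantics is invariant under term-level substitution. -/
  theorem semF_subst (σ : Subst) (A : Form) (ρ : ℕ → Prop) :
      semF ρ (substForm σ A) ↔ semF ρ A := by
    cases A with
    | pvar X ts => simp [substForm, semF]
    | papp P ts => simp [substForm, semF]
    | arr A B => simp only [substForm, semF]; exact imp_congr (semF_subst σ A ρ) (semF_subst σ B ρ)
    | all1 a A => simp only [substForm, semF]; exact semF_subst _ A ρ
    | ex1 a A => simp only [substForm, semF]; exact semF_subst _ A ρ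
    | all2 X A => simp only [substForm, semF]; exact forall_congr' fun p => semF_subst σ A _
    | ex2 X A => simp only [substForm, semF]; exact exists_congr fun p => semF_subst σ A _
    | rcd Fs => simp only [substForm, semF]; exact semAll_subst σ Fs ρ
    | vnt Cs => simp only [substForm, semF]; exact semAny_subst σ Cs ρ
    | mem t A => simp only [substForm, semF]; exact semF_subst σ A ρ
    | rest A t u => simp only [substForm, semF]; exact semF_subst σ A ρ
  theorem semAll_subst (σ : Subst) (Fs : FFlds) (ρ : ℕ → Prop) :
      semAll ρ (substFFlds σ Fs) ↔ semAll ρ Fs := by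
    cases Fs with
    | nil => simp [substFFlds]
    | cons l A Fs =>
        simp only [substFFlds, semAll]
        exact and_congr (semF_subst σ A ρ) (semAll_subst σ Fs ρ)
  theorem semAny_subst (σ : Subst) (Cs : FFlds) (ρ : ℕ → Prop) :
      semAny ρ (substFFlds σ Cs) ↔ semAny ρ Cs := by
    cases Cs with
    | nil => simp [substFFlds]
    | cons l A Cs =>
        simp only [substFFlds, semAny]
        exact or_congr (semF_subst σ A ρ) (semAny_subst σ Cs ρ)
end

mutual
  /-- Substitution of a predicate variable corresponds to updating the assignment. -/
  theorem semF_substP (X : ℕ) (P : List Trm → Set Val) (A : Form) (ρ : ℕ → Prop) :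
      semF ρ (substFormP X P A) ↔ semF (Function.update ρ X (pinterp P)) A := by
    cases A with
    | pvar Y ts =>
        by_cases h : Y = X
        · subst h; simp [substFormP, semF, Function.update_self]
        · simp [substFormP, h, semF, Function.update_of_ne h]
    | papp Q ts => simp [substFormP, semF]
    | arr A B =>
        simp only [substFormP, semF]
        exact imp_congr (semF_substP X P A ρ) (semF_substP X P B ρ)
    | all1 a A => simp only [substFormP, semF]; exact semF_substP X P A ρ
    | ex1 a A => simp only [substFormP, semF]; exact semF_substP X P A ρ
    | all2 Y A =>
        by_cases h : Y = X
        · subst h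
          simp only [substFormP, if_pos rfl, semF]
          exact forall_congr' fun p => by rw [Function.update_idem]
        · simp only [substFormP, if_neg h, semF]
          refine forall_congr' fun p => ?_
          rw [semF_substP X P A, Function.update_comm h]
    | ex2 Y A =>
        by_cases h : Y = X
        · subst h
          simp only [substFormP, if_pos rfl, semF]
          exact exists_congr fun p => by rw [Function.update_idem]
        · simp only [substFormP, if_neg h, semF]
          refine exists_congr fun p => ?_
          rw [semF_substP X P A, Function.update_comm h]
    | rcd Fs => simp only [substFormP, semF]; exact semAll_substP X P Fs ρ
    | vnt Cs => simp only [substFormP, semF]; exact semAny_substP X P Cs ρ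
    | mem t A => simp only [substFormP, semF]; exact semF_substP X P A ρ
    | rest A t u => simp only [substFormP, semF]; exact semF_substP X P A ρ
  theorem semAll_substP (X : ℕ) (P : List Trm → Set Val) (Fs : FFlds) (ρ : ℕ → Prop) :
      semAll ρ (substFFldsP X P Fs) ↔ semAll (Function.update ρ X (pinterp P)) Fs := by
    cases Fs with
    | nil => simp [substFFldsP, semAll, semAny]
    | cons l A Fs =>
        simp only [substFFldsP, semAll]
        exact and_congr (semF_substP X P A ρ) (semAll_substP X P Fs ρ)
  theorem semAny_substP (X : ℕ) (P : List Trm → Set Val) (Cs : FFlds) (ρ : ℕ → Prop) :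
      semAny ρ (substFFldsP X P Cs) ↔ semAny (Function.update ρ X (pinterp P)) Cs := by
    cases Cs with
    | nil => simp [substFFldsP, semAll, semAny]
    | cons l A Cs =>
        simp only [substFFldsP, semAny]
        exact or_congr (semF_substP X P A ρ) (semAny_substP X P Cs ρ)
end

mutual
  /-- Coincidence: truth semantics depends only on free predicate variables. -/
  theorem semF_coin (A : Form) (ρ ρ' : ℕ → Prop)
      (h : ∀ X, (VKind.prd, X) ∈ fvForm A → (ρ X ↔ ρ' X)) :
      semF ρ A ↔ semF ρ' A := by
    cases A with
    | pvar X ts => exact h X (by simp [fvForm])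
    | papp P ts => exact Iff.rfl
    | arr A B =>
        exact imp_congr
          (semF_coin A ρ ρ' fun X hX => h X (by simp [fvForm]; exact Or.inl hX))
          (semF_coin B ρ ρ' fun X hX => h X (by simp [fvForm]; exact Or.inr hX))
    | all1 a A =>
        exact semF_coin A ρ ρ' fun X hX => h X (by simp [fvForm]; exact hX)
    | ex1 a A =>
        exact semF_coin A ρ ρ' fun X hX => h X (by simp [fvForm]; exact hX)
    | all2 Y A =>
        refine forall_congr' fun p => semF_coin A _ _ fun X hX => ?_
        by_cases hXY : X = Y
        · subst hXY; simp [Function.update_self]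
        · rw [Function.update_of_ne hXY, Function.update_of_ne hXY]
          exact h X (by simp [fvForm]; exact ⟨hX, hXY⟩)
    | ex2 Y A =>
        refine exists_congr fun p => semF_coin A _ _ fun X hX => ?_
        by_cases hXY : X = Y
        · subst hXY; simp [Function.update_self]
        · rw [Function.update_of_ne hXY, Function.update_of_ne hXY]
          exact h X (by simp [fvForm]; exact ⟨hX, hXY⟩)
    | rcd Fs => exact semAll_coin Fs ρ ρ' fun X hX => h X (by simpa [fvForm] using hX)
    | vnt Cs => exact semAny_coin Cs ρ ρ' fun X hX => h X (by simpa [fvForm] using hX)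
    | mem t A =>
        exact semF_coin A ρ ρ' fun X hX => h X (by simp [fvForm]; exact Or.inr hX)
    | rest A t u =>
        exact semF_coin A ρ ρ' fun X hX => h X (by simp [fvForm]; exact Or.inl (Or.inl hX))
  theorem semAll_coin (Fs : FFlds) (ρ ρ' : ℕ → Prop)
      (h : ∀ X, (VKind.prd, X) ∈ fvFFlds Fs → (ρ X ↔ ρ' X)) :
      semAll ρ Fs ↔ semAll ρ' Fs := by
    cases Fs with
    | nil => exact Iff.rfl
    | cons l A Fs =>
        exact and_congr
          (semF_coin A ρ ρ' fun X hX => h X (by simp [fvFFlds]; exact Or.inl hX))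
          (semAll_coin Fs ρ ρ' fun X hX => h X (by simp [fvFFlds]; exact Or.inr hX))
  theorem semAny_coin (Cs : FFlds) (ρ ρ' : ℕ → Prop)
      (h : ∀ X, (VKind.prd, X) ∈ fvFFlds Cs → (ρ X ↔ ρ' X)) :
      semAny ρ Cs ↔ semAny ρ' Cs := by
    cases Cs with
    | nil => exact Iff.rfl
    | cons l A Cs =>
        exact or_congr
          (semF_coin A ρ ρ' fun X hX => h X (by simp [fvFFlds]; exact Or.inl hX))
          (semAny_coin Cs ρ ρ' fun X hX => h X (by simp [fvFFlds]; exact Or.inr hX))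
end

/-- Truth semantics of a declaration: a `λ`-declaration asserts its formula,
    a `μ`-declaration refutes it, other declarations are ignored. -/
def semD (ρ : ℕ → Prop) : Decl → Prop
  | .lamD _ A => semF ρ A
  | .muD _ A => ¬ semF ρ A
  | _ => True

/-- Truth semantics of a context. -/
def semCtx (ρ : ℕ → Prop) (Γ : Ctx) : Prop := ∀ d ∈ Γ, semD ρ d

theorem semCtx_cons {ρ : ℕ → Prop} {d : Decl} {Γ : Ctx} :
    semCtx ρ (d :: Γ) ↔ semD ρ d ∧ semCtx ρ Γ := by
  simp [semCtx]

theorem semF_update_not_fv {X : ℕ} {B : Form} (h : (VKind.prd, X) ∉ fvForm B)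
    (ρ : ℕ → Prop) (p : Prop) : semF (Function.update ρ X p) B ↔ semF ρ B := by
  refine semF_coin B _ _ fun Y hY => ?_
  rw [Function.update_of_ne (fun hYX : Y = X => h (hYX ▸ hY))]

theorem semD_update_not_fv {X : ℕ} {d : Decl} (h : (VKind.prd, X) ∉ declFV d)
    (ρ : ℕ → Prop) (p : Prop) : semD (Function.update ρ X p) d ↔ semD ρ d := by
  cases d with
  | lamD x A => exact semF_update_not_fv h ρ p
  | muD α A => exact not_congr (semF_update_not_fv h ρ p)
  | trmD a => exact Iff.rfl
  | prdD Y => exact Iff.rfl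
  | eqD t u => exact Iff.rfl
  | neqD t u => exact Iff.rfl

theorem semCtx_update_not_fv {X : ℕ} {Γ : Ctx} (h : (VKind.prd, X) ∉ fvCtx Γ)
    (ρ : ℕ → Prop) (p : Prop) : semCtx (Function.update ρ X p) Γ ↔ semCtx ρ Γ := by
  refine forall₂_congr fun d hd => ?_
  exact semD_update_not_fv (fun hX => h ⟨d, hd, hX⟩) ρ p

theorem semAll_lookup {ρ : ℕ → Prop} :
    ∀ (Fs : FFlds) (l : ℕ) (A : Form),
      FFlds.lookup Fs l = some A → semAll ρ Fs → semF ρ A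
  | .nil, l, A, h, _ => by simp [FFlds.lookup] at h
  | .cons l' A' Fs, l, A, h, hall => by
      by_cases hl : l' = l
      · simp [FFlds.lookup, hl] at h; exact h ▸ hall.1
      · simp [FFlds.lookup, hl] at h; exact semAll_lookup Fs l A h hall.2

theorem semAny_of_mem {ρ : ℕ → Prop} :
    ∀ (Cs : FFlds) (c : ℕ) (A : Form),
      (c, A) ∈ FFlds.toList Cs → semF ρ A → semAny ρ Cs
  | .nil, c, A, h, _ => by simp [FFlds.toList] at h
  | .cons c' A' Cs, c, A, h, hA => by
      simp [FFlds.toList] at h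
      rcases h with ⟨h1, h2⟩ | h
      · exact Or.inl (h2 ▸ hA)
      · exact Or.inr (semAny_of_mem Cs c A h hA)

/-- Soundness of the typing rules for the truth semantics. -/
theorem soundT {Γ : Ctx} {t : Trm} {A : Form} (h : HasTypeT Γ t A) :
    ∀ ρ : ℕ → Prop, semCtx ρ Γ → semF ρ A := by
  refine HasTypeT.rec
    (motive_1 := fun Γ _v A _ => ∀ ρ : ℕ → Prop, semCtx ρ Γ → semF ρ A)
    (motive_2 := fun Γ _fs Fs _ => ∀ ρ : ℕ → Prop, semCtx ρ Γ → semAll ρ Fs)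
    (motive_3 := fun Γ _v _bs Cs B _ =>
      ∀ ρ : ℕ → Prop, semCtx ρ Γ → semAny ρ Cs → semF ρ B)
    (motive_4 := fun Γ _t A _ => ∀ ρ : ℕ → Prop, semCtx ρ Γ → semF ρ A)
    ?ax ?dn ?arrI ?memI ?all1I ?all2I ?rcdI ?vntI ?fnil ?fcons ?bnil ?bcons
    ?up ?arrE ?muI ?name ?memE ?restI ?restE ?all1E ?ex1I ?ex1E ?all2E ?ex2I
    ?ex2E ?rcdE ?vntE ?eqVL ?eqTL ?eqVR ?eqTR h
  case ax => exact fun Γ x A ρ hρ => hρ _ List.mem_cons_self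
  case dn => exact fun Γ v A _ ih => ih
  case arrI =>
      exact fun Γ x A t B _ ih ρ hρ hA => ih ρ (semCtx_cons.2 ⟨hA, hρ⟩)
  case memI => exact fun Γ v A _ ih => ih
  case all1I => exact fun Γ v a A _ _ ih => ih
  case all2I =>
      exact fun Γ v X A _ hX ih ρ hρ p => ih _ ((semCtx_update_not_fv hX ρ p).2 hρ)
  case rcdI => exact fun Γ fs Fs _ ih => ih
  case vntI =>
      exact fun Γ c v A Cs _ hmem ih ρ hρ => semAny_of_mem Cs c A hmem (ih ρ hρ)
  case fnil => exact fun Γ ρ _ => trivial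
  case fcons => exact fun Γ l v A fs Fs _ _ ih ihs ρ hρ => ⟨ih ρ hρ, ihs ρ hρ⟩
  case bnil => exact fun Γ v B ρ _ h => h.elim
  case bcons =>
      intro Γ v c x t bs A Cs B _ _ ih ihs ρ hρ hany
      rcases hany with hA | hCs
      · exact ih ρ (semCtx_cons.2 ⟨trivial, semCtx_cons.2 ⟨hA, hρ⟩⟩)
      · exact ihs ρ hρ hCs
  case up => exact fun Γ v A _ ih => ih
  case arrE => exact fun Γ t u A B _ _ ih ihu ρ hρ => ih ρ hρ (ihu ρ hρ)
  case muI =>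
      intro Γ α t A _ ih ρ hρ
      by_contra hA
      exact hA (ih ρ (semCtx_cons.2 ⟨hA, hρ⟩))
  case name =>
      exact fun Γ α t A B _ ih ρ hρ => absurd (ih ρ hρ) (semCtx_cons.1 hρ).1
  case memE =>
      intro Γ x u A t _ ih ρ hρ
      rcases semCtx_cons.1 hρ with ⟨hA, hΓ⟩
      exact ih ρ (semCtx_cons.2 ⟨trivial, semCtx_cons.2 ⟨hA, hΓ⟩⟩)
  case restI => exact fun Γ u₁ u₂ t A _ ih => ih
  case restE =>
      intro Γ x A u₁ u₂ t B _ ih ρ hρ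
      rcases semCtx_cons.1 hρ with ⟨hA, hΓ⟩
      exact ih ρ (semCtx_cons.2 ⟨trivial, semCtx_cons.2 ⟨hA, hΓ⟩⟩)
  case all1E => exact fun Γ t a A u _ ih ρ hρ => (semF_subst _ A ρ).2 (ih ρ hρ)
  case ex1I => exact fun Γ t a A u _ ih ρ hρ => (semF_subst _ A ρ).1 (ih ρ hρ)
  case ex1E =>
      intro Γ y A t B a _ _ ih ρ hρ
      rcases semCtx_cons.1 hρ with ⟨hA, hΓ⟩
      exact ih ρ (semCtx_cons.2 ⟨hA, hΓ⟩)
  case all2E =>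
      exact fun Γ t X A P _ _ ih ρ hρ => (semF_substP X P A ρ).2 (ih ρ hρ _)
  case ex2I =>
      exact fun Γ t X A P _ _ ih ρ hρ =>
        ⟨pinterp P, (semF_substP X P A ρ).1 (ih ρ hρ)⟩
  case ex2E =>
      intro Γ x A t B X _ hX ih ρ hρ
      rcases semCtx_cons.1 hρ with ⟨hex, hΓ⟩
      rcases hex with ⟨p, hA⟩
      have hXΓ : (VKind.prd, X) ∉ fvCtx Γ := fun hc => hX (Or.inl hc)
      have hXB : (VKind.prd, X) ∉ fvForm B := fun hc => hX (Or.inr hc)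
      have := ih (Function.update ρ X p)
        (semCtx_cons.2 ⟨hA, (semCtx_update_not_fv hXΓ ρ p).2 hΓ⟩)
      exact (semF_update_not_fv hXB ρ p).1 this
  case rcdE =>
      exact fun Γ v Fs l A _ hlk ih ρ hρ => semAll_lookup Fs l A hlk (ih ρ hρ)
  case vntE =>
      exact fun Γ v Cs bs B _ _ ih ihb ρ hρ => ihb ρ hρ (ih ρ hρ)
  case eqVL => exact fun Γ w₁ w₂ x t A _ ih => ih
  case eqTL => exact fun Γ t₁ t₂ a t A _ ih => ih
  case eqVR =>
      exact fun Γ w₁ w₂ x t A _ ih ρ hρ =>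
        (semF_subst _ A ρ).2 ((semF_subst _ A ρ).1 (ih ρ hρ))
  case eqTR =>
      exact fun Γ t₁ t₂ a t A _ ih ρ hρ =>
        (semF_subst _ A ρ).2 ((semF_subst _ A ρ).1 (ih ρ hρ))

/-- Theorem 8 (logical consistency): no term has type ⊥ = ∀X₀ X₀ in the
    empty context. -/
theorem consistency :
    ¬ ∃ t : Trm, HasTypeT ([] : Ctx) t (Form.all2 0 (.pvar 0 [])) := by
  rintro ⟨t, ht⟩
  have h := soundT ht (fun _ => True) (by intro d hd; simp at hd)
  have hF : semF (Function.update (fun _ => True) 0 False) (Form.pvar 0 []) := h False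
  rw [semF] at hF
  rw [Function.update_self] at hF
  exact hF

end CBV
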